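/- Let V : ℝ → ℝ be a bounded measurable function and let f : ℝ → ℝ be a function in H¹(ℝ). Let μ > 0 and suppose that ∫_ℝ ( f'(y)² + V(y) f(y)² ) dy ≥ μ ∫_ℝ f(y)² dy. Then ∫_ℝ ( f'(y)² + V(y) f(y)² ) dy ≥ (1 + μ^{-1} ‖V‖_{L^∞})^{-1} ∫_ℝ f'(y)² dy, and consequently there exists δ > 0 depending only on μ and ‖V‖_{L^∞} (and not on f) such that ∫_ℝ ( f'(y)² + V(y) f(y)² ) dy ≥ δ ‖f‖_{H¹}². -/

import Mathlib

open Real MeasureTheory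

theorem coercivity_bootstrap (V : ℝ → ℝ) (hVmeas : Measurable V)
    (M : ℝ) (hM : ∀ᵐ y : ℝ, |V y| ≤ M)
    (μ : ℝ) (hμ : 0 < μ) :
    ∃ δ : ℝ, 0 < δ ∧
      ∀ f : ℝ → ℝ, Differentiable ℝ f →
        MemLp f 2 (volume : Measure ℝ) → MemLp (deriv f) 2 (volume : Measure ℝ) →
        μ * (∫ y : ℝ, f y ^ 2) ≤ (∫ y : ℝ, (deriv f y ^ 2 + V y * f y ^ 2)) →
        (1 + μ⁻¹ * M)⁻¹ * (∫ y : ℝ, deriv f y ^ 2)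
            ≤ (∫ y : ℝ, (deriv f y ^ 2 + V y * f y ^ 2)) ∧
        δ * ((∫ y : ℝ, deriv f y ^ 2) + ∫ y : ℝ, f y ^ 2)
            ≤ (∫ y : ℝ, (deriv f y ^ 2 + V y * f y ^ 2)) := by
  have hM0 : 0 ≤ M := by
    have := hM.exists
    obtain ⟨y, hy⟩ := this
    exact le_trans (abs_nonneg _) hy
  have hden : 0 < 1 + μ⁻¹ * M := by positivity
  refine ⟨min (1 + μ⁻¹ * M)⁻¹ μ / 2, by positivity, ?_⟩
  intro f hdf hf2 hdf2 hcoerc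
  have hfsq : Integrable (fun y => f y ^ 2) volume := hf2.integrable_sq
  have hdsq : Integrable (fun y => deriv f y ^ 2) volume := hdf2.integrable_sq
  have hVfsq : Integrable (fun y => V y * f y ^ 2) volume := by
    refine hfsq.bdd_mul (c := M) hVmeas.aestronglyMeasurable ?_
    filter_upwards [hM] with y hy using by simpa using hy
  have hQsplit : (∫ y : ℝ, (deriv f y ^ 2 + V y * f y ^ 2))
      = (∫ y : ℝ, deriv f y ^ 2) + ∫ y : ℝ, V y * f y ^ 2 :=
    integral_add hdsq hVfsq
  set Q := ∫ y : ℝ, (deriv f y ^ 2 + V y * f y ^ 2) with hQ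
  set A := ∫ y : ℝ, deriv f y ^ 2 with hA
  set B := ∫ y : ℝ, f y ^ 2 with hB
  have hB0 : 0 ≤ B := integral_nonneg fun y => sq_nonneg _
  have hQ0 : 0 ≤ Q := le_trans (by positivity) hcoerc
  have hlow : -(M * B) ≤ ∫ y : ℝ, V y * f y ^ 2 := by
    have : ∫ y : ℝ, -(M * f y ^ 2) ≤ ∫ y : ℝ, V y * f y ^ 2 := by
      refine integral_mono_ae ((hfsq.const_mul M).neg) hVfsq ?_
      filter_upwards [hM] with y hy
      have h1 : -M ≤ V y := neg_le_of_abs_le hy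
      nlinarith [sq_nonneg (f y)]
    calc -(M * B) = ∫ y : ℝ, -(M * f y ^ 2) := by
          rw [integral_neg, integral_const_mul]
      _ ≤ _ := this
  have hAQ : A ≤ (1 + μ⁻¹ * M) * Q := by
    have hBQ : B ≤ μ⁻¹ * Q := by
      rw [le_inv_mul_iff₀ hμ]; exact hcoerc
    nlinarith [hQsplit]
  have h1 : (1 + μ⁻¹ * M)⁻¹ * A ≤ Q := by
    rw [inv_mul_le_iff₀ hden]; linarith
  refine ⟨h1, ?_⟩
  have hBQ2 : μ * B ≤ Q := hcoerc
  have hmin1 : min (1 + μ⁻¹ * M)⁻¹ μ * A ≤ Q := by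
    have : min (1 + μ⁻¹ * M)⁻¹ μ * A ≤ (1 + μ⁻¹ * M)⁻¹ * A := by
      exact mul_le_mul_of_nonneg_right (min_le_left _ _)
        (integral_nonneg fun y => sq_nonneg _)
    linarith
  have hmin2 : min (1 + μ⁻¹ * M)⁻¹ μ * B ≤ Q := by
    have : min (1 + μ⁻¹ * M)⁻¹ μ * B ≤ μ * B :=
      mul_le_mul_of_nonneg_right (min_le_right _ _) hB0
    linarith
  nlinarith
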